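/- arXiv:2008.01497 — 2 statements merged into one kernel-verified Lean document; each statement's English description precedes it below -/
import Mathlib

section
/- The fixed point of the modified BSCP iteration is the greatest subautomaton of A_trim (with respect to the subsystem order) that is trim and satisfies both the controllability condition (every uncontrollable event feasible in A at a surviving state survives) and the race-free condition; i.e., any subautomaton H' ⊑ A_trim satisfying these conditions satisfies H' ⊑ H_∞. -/
/-- Active events of state `a` within the subautomaton with state set `H`. -/
def ActiveIn {S Ev : Type*} (δ : S → Ev → Option S) (H : Set S) (a : S) :
    Set Ev :=
  {ev | ∃ b ∈ H, δ a ev = some b}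

/-- Reachability from `a0` staying inside the set `allowed`. -/
inductive ReachIn {S Ev : Type*} (δ : S → Ev → Option S) (allowed : Set S)
    (a0 : S) : S → Prop where
  | base : a0 ∈ allowed → ReachIn δ allowed a0 a0
  | step : ∀ a ev b, ReachIn δ allowed a0 a → δ a ev = some b →
      b ∈ allowed → ReachIn δ allowed a0 b

/-- States of `H` satisfying the controllability and race-free conditions. -/
def goodStates {S Ev E : Type*} (δ : S → Ev → Option S) (Aset : Set S)
    (Euc : Set Ev) (obsEv : E → Ev) (delEv : E → Ev) (H : Set S) : Set S :=
  {a ∈ H |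
    (∀ ev ∈ Euc, ev ∈ ActiveIn δ Aset a → ev ∈ ActiveIn δ H a) ∧
    (∀ e : E, obsEv e ∈ ActiveIn δ Aset a →
      (obsEv e ∈ ActiveIn δ H a ∨ delEv e ∈ ActiveIn δ H a))}

/-- One iteration of the modified BSCP algorithm. -/
def stepBSCP {S Ev E : Type*} (δ : S → Ev → Option S) (Aset : Set S)
    (Euc : Set Ev) (obsEv : E → Ev) (delEv : E → Ev) (a0 : S) (H : Set S) :
    Set S :=
  {b | ReachIn δ (goodStates δ Aset Euc obsEv delEv H) a0 b}

/-- Trimness of a subautomaton: every state is reachable from `a0` within it. -/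
def TrimCond {S Ev : Type*} (δ : S → Ev → Option S) (a0 : S) (H : Set S) : Prop :=
  ∀ a ∈ H, ReachIn δ H a0 a

/-- Controllability: every uncontrollable event feasible in `A` at a surviving
state survives. -/
def CtrlCond {S Ev : Type*} (δ : S → Ev → Option S) (Aset : Set S)
    (Euc : Set Ev) (H : Set S) : Prop :=
  ∀ a ∈ H, ∀ ev ∈ Euc, ev ∈ ActiveIn δ Aset a → ev ∈ ActiveIn δ H a

/-- Race-freeness: every feasible observable event keeps `e` or `e_d`. -/
def RaceCond {S Ev E : Type*} (δ : S → Ev → Option S) (Aset : Set S)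
    (obsEv : E → Ev) (delEv : E → Ev) (H : Set S) : Prop :=
  ∀ a ∈ H, ∀ e : E, obsEv e ∈ ActiveIn δ Aset a →
    (obsEv e ∈ ActiveIn δ H a ∨ delEv e ∈ ActiveIn δ H a)

lemma ReachIn.mono {S Ev : Type*} {δ : S → Ev → Option S} {A B : Set S}
    (hAB : A ⊆ B) {a0 a : S} (h : ReachIn δ A a0 a) : ReachIn δ B a0 a := by
  induction h with
  | base h => exact ReachIn.base (hAB h)
  | step a ev b _ hδ hb ih => exact ReachIn.step a ev b ih hδ (hAB hb)

lemma ReachIn.mem {S Ev : Type*} {δ : S → Ev → Option S} {A : Set S}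
    {a0 a : S} (h : ReachIn δ A a0 a) : a ∈ A := by
  cases h with
  | base h => exact h
  | step a ev b _ hδ hb => exact hb

lemma ActiveIn.mono {S Ev : Type*} {δ : S → Ev → Option S} {A B : Set S}
    (hAB : A ⊆ B) {a : S} {ev : Ev} (h : ev ∈ ActiveIn δ A a) :
    ev ∈ ActiveIn δ B a := by
  obtain ⟨b, hb, hδ⟩ := h
  exact ⟨b, hAB hb, hδ⟩

/-- The fixed point `H_∞` of the modified BSCP iteration is the greatest
subautomaton of `A_trim` that is trim and satisfies the controllability and
race-free conditions: `H_∞` satisfies them, and any `H' ⊑ A_trim` satisfying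
them satisfies `H' ⊑ H_∞`. -/
theorem stmt16 {S Ev E : Type*} (δ : S → Ev → Option S) (Aset : Set S)
    (Euc : Set Ev) (obsEv : E → Ev) (delEv : E → Ev) (a0 : S) (Atrim : Set S)
    (n : ℕ)
    (hfix : stepBSCP δ Aset Euc obsEv delEv a0
        ((stepBSCP δ Aset Euc obsEv delEv a0)^[n] Atrim) =
      (stepBSCP δ Aset Euc obsEv delEv a0)^[n] Atrim) :
    (TrimCond δ a0 ((stepBSCP δ Aset Euc obsEv delEv a0)^[n] Atrim) ∧
     CtrlCond δ Aset Euc ((stepBSCP δ Aset Euc obsEv delEv a0)^[n] Atrim) ∧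
     RaceCond δ Aset obsEv delEv
       ((stepBSCP δ Aset Euc obsEv delEv a0)^[n] Atrim)) ∧
    (∀ H' ⊆ Atrim, TrimCond δ a0 H' → CtrlCond δ Aset Euc H' →
      RaceCond δ Aset obsEv delEv H' →
        H' ⊆ (stepBSCP δ Aset Euc obsEv delEv a0)^[n] Atrim) := by
  
  set F := stepBSCP δ Aset Euc obsEv delEv a0 with hF
  set H := F^[n] Atrim with hH
  have hgood : goodStates δ Aset Euc obsEv delEv H ⊆ H := fun a ha => ha.1
  have hmemgood : ∀ a ∈ H, a ∈ goodStates δ Aset Euc obsEv delEv H := by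
    intro a ha
    rw [← hfix] at ha
    exact ReachIn.mem ha
  constructor
  · refine ⟨?_, ?_, ?_⟩
    · intro a ha
      rw [← hfix] at ha
      exact ReachIn.mono hgood ha
    · intro a ha ev hev hact
      exact (hmemgood a ha).2.1 ev hev hact
    · intro a ha e hact
      exact (hmemgood a ha).2.2 e hact
  · intro H' hsub htrim hctrl hrace
    have key : ∀ k, H' ⊆ F^[k] Atrim := by
      intro k
      induction k with
      | zero => simpa using hsub
      | succ k ih =>
        have hg : H' ⊆ goodStates δ Aset Euc obsEv delEv (F^[k] Atrim) := by
          intro a ha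
          refine ⟨ih ha, ?_, ?_⟩
          · intro ev hev hact
            exact ActiveIn.mono ih (hctrl a ha ev hev hact)
          · intro e hact
            rcases hrace a ha e hact with h | h
            · exact Or.inl (ActiveIn.mono ih h)
            · exact Or.inr (ActiveIn.mono ih h)
        rw [Function.iterate_succ_apply']
        intro a ha
        exact ReachIn.mono hg (htrim a ha)
    exact key n
end

section
/- The AIDA has at most 2^{|X|+1}·|Q̃| states, and if all events are observable (Σ_uo = ∅) then the reachable AIDA has at most 2·|X|·|Q̃| states. -/
/-- Edited symbols: genuine, inserted (`Σ_a^i`) and deleted (`Σ_a^d`) events. -/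
inductive Ed (E : Type*) where
  | plain (e : E)
  | ins (e : E)
  | del (e : E)

/-- Extension of the plant transition function to strings. -/
def deltaStar {X E : Type*} (δ : X → E → Option X) : X → List E → Option X
  | x, [] => some x
  | x, e :: s => (δ x e).bind fun y => deltaStar δ y s

/-- Unobservable reach `UR_γ(S)` (strings over `Σ_uo ∩ γ`). -/
def URset {X E : Type*} (δ : X → E → Option X) (uo : Set E) (γ : Set E)
    (S : Set X) : Set X :=
  {x | ∃ u ∈ S, ∃ s : List E, (∀ e ∈ s, e ∈ uo ∧ e ∈ γ) ∧ deltaStar δ u s = some x}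

/-- Observable reach `NX_e(S)`. -/
def NXset {X E : Type*} (δ : X → E → Option X) (e : E) (S : Set X) : Set X :=
  {x | ∃ u ∈ S, δ u e = some x}

/-- An Insertion-Deletion Attack structure (IDA), control decisions `γ ⊆ Σ`. -/
structure IDA (X Q E : Type*) where
  QS : Set (Set X × Q)
  QE : Set (Set X × Q)
  hSE : (Set X × Q) → Set E → Option (Set X × Q)
  hES : (Set X × Q) → Ed E → Option (Set X × Q)

/-- States of an IDA reachable from the initial S-state `y0`. -/
inductive ReachIDA {X Q E : Type*} (A : IDA X Q E) (y0 : Set X × Q) :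
    (Set X × Q) → Prop where
  | base : ReachIDA A y0 y0
  | se : ∀ y γ z, ReachIDA A y0 y → A.hSE y γ = some z → ReachIDA A y0 z
  | es : ∀ z ev y, ReachIDA A y0 z → A.hES z ev = some y → ReachIDA A y0 y

lemma URset_empty {X E : Type*} (δ : X → E → Option X) (γ : Set E) (S : Set X) :
    URset δ ∅ γ S = S := by
  ext x
  constructor
  · rintro ⟨u, hu, s, hs, hd⟩
    cases s with
    | nil => simp [deltaStar] at hd; subst hd; exact hu
    | cons e t => exact absurd (hs e (by simp)).1 (by simp)
  · intro hx
    exact ⟨x, hx, [], by simp, rfl⟩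

lemma singleton_invariant {X Q E : Type*}
    (δ : X → E → Option X) (A : IDA X Q E) (x0 : X) (q0 : Q)
    (hSEshape : ∀ y γ z, A.hSE y γ = some z → z = (URset δ ∅ γ y.1, y.2))
    (hESshape : ∀ z ev y, A.hES z ev = some y →
      (∃ e : E, (ev = Ed.plain e ∨ ev = Ed.del e) ∧
        (∃ x ∈ z.1, (δ x e).isSome) ∧ y.1 = NXset δ e z.1) ∨
      (∃ e : E, ev = Ed.ins e ∧ y.1 = z.1)) :
    ∀ w, ReachIDA A ({x0}, q0) w → ∃ x : X, w.1 = {x} := by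
  intro w hw
  induction hw with
  | base => exact ⟨x0, rfl⟩
  | se y γ z _ h ih =>
      obtain ⟨x, hx⟩ := ih
      refine ⟨x, ?_⟩
      rw [hSEshape y γ z h]
      simp [URset_empty, hx]
  | es z ev y _ h ih =>
      obtain ⟨x, hx⟩ := ih
      rcases hESshape z ev y h with ⟨e, _, ⟨x', hx', hsome⟩, hy⟩ | ⟨e, _, hy⟩
      · rw [hx] at hx'
        rw [Set.mem_singleton_iff] at hx'
        subst hx'
        obtain ⟨v, hv⟩ := Option.isSome_iff_exists.mp hsome
        refine ⟨v, ?_⟩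
        rw [hy, hx]
        ext w
        simp [NXset, hv]
      · exact ⟨x, by rw [hy, hx]⟩

/-- The AIDA has at most `2^{|X|+1}·|Q̃|` states; and if all events are
observable (`Σ_uo = ∅`) then, all its states being reachable from the initial
state `({x₀}, q₀)` via transitions of the shape prescribed by Definition 4, it
has at most `2·|X|·|Q̃|` states. -/
theorem stmt17 {X Q E : Type*} [Fintype X] [Fintype Q]
    (δ : X → E → Option X) (uo : Set E) (A : IDA X Q E) (x0 : X) (q0 : Q)
    (hreach : ∀ w ∈ A.QS ∪ A.QE, ReachIDA A ({x0}, q0) w)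
    (hSEshape : ∀ y γ z, A.hSE y γ = some z → z = (URset δ uo γ y.1, y.2))
    (hESshape : ∀ z ev y, A.hES z ev = some y →
      (∃ e : E, (ev = Ed.plain e ∨ ev = Ed.del e) ∧
        (∃ x ∈ z.1, (δ x e).isSome) ∧ y.1 = NXset δ e z.1) ∨
      (∃ e : E, ev = Ed.ins e ∧ y.1 = z.1)) :
    A.QS.ncard + A.QE.ncard ≤ 2 ^ (Fintype.card X + 1) * Fintype.card Q ∧
    (uo = ∅ →
      A.QS.ncard + A.QE.ncard ≤ 2 * Fintype.card X * Fintype.card Q) := by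
  classical
  constructor
  · have hb : ∀ S : Set (Set X × Q), S.ncard ≤ 2 ^ Fintype.card X * Fintype.card Q := by
      intro S
      calc S.ncard ≤ (Set.univ : Set (Set X × Q)).ncard :=
            Set.ncard_le_ncard (Set.subset_univ S) Set.finite_univ
        _ = Nat.card (Set X × Q) := Set.ncard_univ _
        _ = 2 ^ Fintype.card X * Fintype.card Q := by
            simp [Nat.card_eq_fintype_card, Fintype.card_prod, Fintype.card_set]
    calc A.QS.ncard + A.QE.ncard
        ≤ 2 ^ Fintype.card X * Fintype.card Q + 2 ^ Fintype.card X * Fintype.card Q :=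
          Nat.add_le_add (hb _) (hb _)
      _ = 2 ^ (Fintype.card X + 1) * Fintype.card Q := by ring
  · intro huo
    subst huo
    set T : Set (Set X × Q) := (fun p : X × Q => (({p.1} : Set X), p.2)) '' Set.univ with hT
    have hTfin : T.Finite := (Set.finite_univ).image _
    have hTcard : T.ncard ≤ Fintype.card X * Fintype.card Q := by
      calc T.ncard ≤ (Set.univ : Set (X × Q)).ncard := Set.ncard_image_le Set.finite_univ
        _ = Nat.card (X × Q) := Set.ncard_univ _
        _ = Fintype.card X * Fintype.card Q := by
            simp [Nat.card_eq_fintype_card, Fintype.card_prod]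
    have hsub : ∀ S : Set (Set X × Q), (∀ w ∈ S, ReachIDA A ({x0}, q0) w) →
        S.ncard ≤ Fintype.card X * Fintype.card Q := by
      intro S hS
      have : S ⊆ T := by
        intro w hw
        obtain ⟨x, hx⟩ := singleton_invariant δ A x0 q0 hSEshape hESshape w (hS w hw)
        exact ⟨(x, w.2), trivial, by simp [← hx]⟩
      exact le_trans (Set.ncard_le_ncard this hTfin) hTcard
    have h1 := hsub A.QS (fun w hw => hreach w (Or.inl hw))
    have h2 := hsub A.QE (fun w hw => hreach w (Or.inr hw))
    refine le_trans (Nat.add_le_add h1 h2) (le_of_eq ?_)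
    ring
end
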